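/- Let m, n, k, N ∈ ℕ with k ≥ 1 and N > 2k, and let L_d : (ℝ^m)^{k+1} × Matrix(n,ℝ)^k → ℝ be smooth on the open set where all matrix arguments are invertible (a G-invariant discrete higher-order Lagrangian with arguments (q_i, …, q_{i+k}, W_i, …, W_{i+k-1})). Given q₀, …, q_N ∈ ℝ^m and invertible g₀, …, g_N ∈ Matrix(n,ℝ), set W_i = g_i⁻¹ g_{i+1} and A_d = Σ_{i=0}^{N-k} L_d(q_i, …, q_{i+k}, W_i, …, W_{i+k-1}). Then A_d is stationary under all variations q_i(ε) = q_i + ε δq_i and g_i(ε) = g_i · exp(ε Σ_i) with δq_i = 0 and Σ_i = 0 for i ∈ {0, …, k−1} ∪ {N−k+1, …, N}, if and only if the discrete higher-order Lagrange–Poincaré equations hold for i = k, …, N−k: Σ_{j=0}^{k} D_{q,j}L_d^{(i-j)} = 0 in (ℝ^m)*, and for every η ∈ Matrix(n,ℝ): Σ_{j=1}^{k} D_{W,j}L_d^{(i-j)}(W_{i-1} η) − Σ_{j=1}^{k} D_{W,j}L_d^{(i-j+1)}(η W_i) = 0, where L_d^{(r)} denotes L_d evaluated at (q_r, …, q_{r+k},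 W_r, …, W_{r+k-1}), D_{q,j} is the partial Fréchet derivative with respect to the (j+1)-th ℝ^m argument, and D_{W,j} is the partial Fréchet derivative with respect to the j-th matrix argument. -/

import Mathlib

open scoped ContDiff BigOperators

section ExpDerivAux
attribute [local instance] Matrix.linftyOpNormedAddCommGroup Matrix.linftyOpNormedSpace
  Matrix.linftyOpNormedRing Matrix.linftyOpNormedAlgebra

theorem Stmt10Aux.expEntry_hasDerivAt {n : ℕ} (S : Matrix (Fin n) (Fin n) ℝ) (i j : Fin n) :
    HasDerivAt (fun ε : ℝ => NormedSpace.exp (ε • S) i j) (S i j) 0 := by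
  have h : HasDerivAt (fun ε : ℝ => NormedSpace.exp (ε • S)) S 0 := by
    have h0 := hasDerivAt_exp_smul_const (𝕂 := ℝ) S 0
    simp only [zero_smul, NormedSpace.exp_zero, one_mul] at h0
    exact h0
  exact (LinearMap.toContinuousLinearMap
    (Matrix.entryLinearMap ℝ ℝ i j)).hasFDerivAt.comp_hasDerivAt 0 h
end ExpDerivAux

/-- generic reindexing helper -/
theorem Stmt10Aux.helperH {k N t : ℕ} (d : Fin t → ℕ) (hd : ∀ j, d j ≤ k) (G : ℕ → Fin t → ℝ)
    (hv : ∀ r ≤ N, r ∉ Finset.Icc k (N - k) → ∀ j, G r j = 0) (hkN : k ≤ N) :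
    ∑ i ∈ Finset.range (N - k + 1), ∑ j : Fin t, G (i + d j) j
      = ∑ r ∈ Finset.Icc k (N - k), ∑ j : Fin t, G r j := by
  have step1 : ∀ i ∈ Finset.range (N - k + 1), ∀ j : Fin t,
      G (i + d j) j = ∑ r ∈ Finset.range (N + 1), if r = i + d j then G r j else 0 := by
    intro i hi j
    rw [Finset.sum_ite_eq' (Finset.range (N + 1)) (i + d j) (fun r => G r j)]
    have : i + d j ∈ Finset.range (N + 1) := by
      simp only [Finset.mem_range] at hi ⊢
      have := hd j; omega
    simp [this]
  calc ∑ i ∈ Finset.range (N - k + 1), ∑ j : Fin t, G (i + d j) j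
      = ∑ i ∈ Finset.range (N - k + 1), ∑ j : Fin t, ∑ r ∈ Finset.range (N + 1),
          if r = i + d j then G r j else 0 := by
        refine Finset.sum_congr rfl fun i hi => Finset.sum_congr rfl fun j _ => step1 i hi j
    _ = ∑ i ∈ Finset.range (N - k + 1), ∑ r ∈ Finset.range (N + 1), ∑ j : Fin t,
          if r = i + d j then G r j else 0 :=
        Finset.sum_congr rfl fun i _ => Finset.sum_comm
    _ = ∑ r ∈ Finset.range (N + 1), ∑ i ∈ Finset.range (N - k + 1), ∑ j : Fin t,
          if r = i + d j then G r j else 0 := Finset.sum_comm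
    _ = ∑ r ∈ Finset.range (N + 1), ∑ j : Fin t, ∑ i ∈ Finset.range (N - k + 1),
          if r = i + d j then G r j else 0 :=
        Finset.sum_congr rfl fun r _ => Finset.sum_comm
    _ = ∑ r ∈ Finset.Icc k (N - k), ∑ j : Fin t, ∑ i ∈ Finset.range (N - k + 1),
          if r = i + d j then G r j else 0 := by
        refine (Finset.sum_subset ?_ ?_).symm
        · intro r hr
          simp only [Finset.mem_Icc] at hr
          simp only [Finset.mem_range]; omega
        · intro r hr hnr
          simp only [Finset.mem_range] at hr
          refine Finset.sum_eq_zero fun j _ => Finset.sum_eq_zero fun i _ => ?_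
          rw [hv r (by omega) hnr j]
          simp
    _ = ∑ r ∈ Finset.Icc k (N - k), ∑ j : Fin t, G r j := by
        refine Finset.sum_congr rfl fun r hr => Finset.sum_congr rfl fun j _ => ?_
        simp only [Finset.mem_Icc] at hr
        have heq : ∀ i ∈ Finset.range (N - k + 1),
            (if r = i + d j then G r j else 0) = (if i = r - d j then G r j else 0) := by
          intro i hi
          simp only [Finset.mem_range] at hi
          refine if_congr ?_ rfl rfl
          have := hd j; omega
        rw [Finset.sum_congr rfl heq,
          Finset.sum_ite_eq' (Finset.range (N - k + 1)) (r - d j) (fun _ => G r j)]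
        have : r - d j ∈ Finset.range (N - k + 1) := by
          simp only [Finset.mem_range]; omega
        simp [this]

attribute [local instance] Matrix.normedAddCommGroup Matrix.normedSpace

namespace Stmt10

variable {m n k : ℕ}

abbrev Vec (m : ℕ) := Fin m → ℝ
abbrev Mat (n : ℕ) := Matrix (Fin n) (Fin n) ℝ

abbrev Tup (m n k : ℕ) := (Fin (k + 1) → Vec m) × (Fin k → Mat n)

/-- partial Fréchet derivative with respect to the `(j+1)`-th `ℝ^m`-slot -/
noncomputable def Dq (L : Tup m n k → ℝ) (j : Fin (k + 1)) (p : Tup m n k) :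
    Vec m →L[ℝ] ℝ :=
  fderiv ℝ (fun x => L (Function.update p.1 j x, p.2)) (p.1 j)

/-- partial Fréchet derivative with respect to the `j`-th matrix slot -/
noncomputable def DW (L : Tup m n k → ℝ) (j : Fin k) (p : Tup m n k) :
    Mat n →L[ℝ] ℝ :=
  fderiv ℝ (fun x => L (p.1, Function.update p.2 j x)) (p.2 j)

/-- the discrete point `(q_i, …, q_{i+k}, W_i, …, W_{i+k-1})` -/
noncomputable def dpt (q : ℕ → Vec m) (g : ℕ → Mat n) (i : ℕ) : Tup m n k :=
  (fun j : Fin (k + 1) => q (i + j),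
   fun j : Fin k => (g (i + j))⁻¹ * g (i + j + 1))

noncomputable def mulCLM (n : ℕ) : Mat n →L[ℝ] Mat n →L[ℝ] Mat n :=
  LinearMap.toContinuousLinearMap
    ((LinearMap.toContinuousLinearMap (E := Mat n) (F' := Mat n)).toLinearMap.comp
      (LinearMap.mul ℝ (Mat n)))

@[simp] theorem mulCLM_apply (A B : Mat n) : mulCLM n A B = A * B := rfl

theorem _root_.HasDerivAt.matmul {f g : ℝ → Mat n} {f' g' : Mat n} {t : ℝ}
    (hf : HasDerivAt f f' t) (hg : HasDerivAt g g' t) :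
    HasDerivAt (fun x => f x * g x) (f' * g t + f t * g') t := by
  letI : NormedRing (Mat n) := Matrix.linftyOpNormedRing
  letI : NormedAlgebra ℝ (Mat n) := Matrix.linftyOpNormedAlgebra
  exact hf.mul hg

theorem exp_hasDerivAt (S : Mat n) :
    HasDerivAt (fun ε : ℝ => NormedSpace.exp (ε • S)) S 0 :=
  hasDerivAt_pi.2 fun i => hasDerivAt_pi.2 fun j => Stmt10Aux.expEntry_hasDerivAt S i j

theorem slot_hasDerivAt (ga gb Sa Sb : Mat n) :
    HasDerivAt (fun ε : ℝ =>
        (ga * NormedSpace.exp (ε • Sa))⁻¹ * (gb * NormedSpace.exp (ε • Sb)))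
      (ga⁻¹ * gb * Sb - Sa * (ga⁻¹ * gb)) 0 := by
  have hrw : (fun ε : ℝ =>
        (ga * NormedSpace.exp (ε • Sa))⁻¹ * (gb * NormedSpace.exp (ε • Sb)))
      = (fun ε : ℝ =>
          NormedSpace.exp (ε • (-Sa)) * (ga⁻¹ * gb) * NormedSpace.exp (ε • Sb)) := by
    funext ε
    rw [Matrix.mul_inv_rev, smul_neg, Matrix.exp_neg]
    simp only [mul_assoc]
  rw [hrw]
  have h := ((exp_hasDerivAt (-Sa)).matmul (hasDerivAt_const (0:ℝ) (ga⁻¹ * gb))).matmul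
    (exp_hasDerivAt Sb)
  simp only [zero_smul, NormedSpace.exp_zero, mul_zero, add_zero, one_mul, mul_one] at h
  convert h using 1
  noncomm_ring

theorem isOpen_U : IsOpen {p : Tup m n k | ∀ j, IsUnit (p.2 j)} := by
  have : {p : Tup m n k | ∀ j, IsUnit (p.2 j)}
      = ⋂ j : Fin k, {p : Tup m n k | (p.2 j).det ≠ 0} := by
    ext p
    simp [Matrix.isUnit_iff_isUnit_det, isUnit_iff_ne_zero]
  rw [this]
  exact isOpen_iInter_of_finite fun j =>
    (isOpen_ne_fun (((continuous_apply j).comp continuous_snd).matrix_det) continuous_const)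

theorem dq_eq (L : Tup m n k → ℝ) {p : Tup m n k} (hd : DifferentiableAt ℝ L p)
    (j : Fin (k + 1)) (w : Vec m) :
    Dq L j p w = fderiv ℝ L p (Pi.single j w, 0) := by
  have hupd : HasFDerivAt (fun x : Vec m => (Function.update p.1 j x, p.2))
      (((ContinuousLinearMap.pi (Pi.single j (ContinuousLinearMap.id ℝ (Vec m))))).prod 0)
      (p.1 j) :=
    HasFDerivAt.prodMk (hasFDerivAt_update p.1 (p.1 j)) (hasFDerivAt_const p.2 (p.1 j))
  have hL : HasFDerivAt L (fderiv ℝ L p)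
      ((fun x : Vec m => (Function.update p.1 j x, p.2)) (p.1 j)) := by
    simpa [Function.update_eq_self] using hd.hasFDerivAt
  have hcomp := hL.comp (p.1 j) hupd
  have heq : Dq L j p = (fderiv ℝ L p).comp
      ((((ContinuousLinearMap.pi (Pi.single j (ContinuousLinearMap.id ℝ (Vec m))))).prod 0)) := by
    rw [Dq]
    exact hcomp.fderiv
  rw [heq]
  simp only [ContinuousLinearMap.comp_apply, ContinuousLinearMap.prod_apply,
    ContinuousLinearMap.zero_apply]
  congr 2
  ext i x
  simp [ContinuousLinearMap.pi_apply, Pi.single_apply]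
  split_ifs <;> simp

theorem dw_eq (L : Tup m n k → ℝ) {p : Tup m n k} (hd : DifferentiableAt ℝ L p)
    (j : Fin k) (w : Mat n) :
    DW L j p w = fderiv ℝ L p (0, Pi.single j w) := by
  have hupd : HasFDerivAt (fun x : Mat n => (p.1, Function.update p.2 j x))
      ((0 : Mat n →L[ℝ] (Fin (k+1) → Vec m)).prod
        (ContinuousLinearMap.pi (Pi.single j (ContinuousLinearMap.id ℝ (Mat n)))))
      (p.2 j) :=
    HasFDerivAt.prodMk (hasFDerivAt_const p.1 (p.2 j)) (hasFDerivAt_update p.2 (p.2 j))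
  have hL : HasFDerivAt L (fderiv ℝ L p)
      ((fun x : Mat n => (p.1, Function.update p.2 j x)) (p.2 j)) := by
    simpa [Function.update_eq_self] using hd.hasFDerivAt
  have hcomp := hL.comp (p.2 j) hupd
  have heq : DW L j p = (fderiv ℝ L p).comp
      ((0 : Mat n →L[ℝ] (Fin (k+1) → Vec m)).prod
        (ContinuousLinearMap.pi (Pi.single j (ContinuousLinearMap.id ℝ (Mat n))))) := by
    rw [DW]
    exact hcomp.fderiv
  rw [heq]
  simp only [ContinuousLinearMap.comp_apply, ContinuousLinearMap.prod_apply,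
    ContinuousLinearMap.zero_apply]
  congr 2
  ext i x
  simp [ContinuousLinearMap.pi_apply, Pi.single_apply]
  split_ifs <;> simp

theorem fderiv_decomp (L : Tup m n k → ℝ) {p : Tup m n k} (hd : DifferentiableAt ℝ L p)
    (u : Fin (k + 1) → Vec m) (v : Fin k → Mat n) :
    fderiv ℝ L p (u, v) = ∑ j, Dq L j p (u j) + ∑ j, DW L j p (v j) := by
  have h1 : (u, v) = (∑ j, (Pi.single j (u j), 0) : (Fin (k+1) → Vec m) × (Fin k → Mat n))
      + ∑ j, ((0 : Fin (k+1) → Vec m), Pi.single j (v j)) := by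
    rw [Prod.ext_iff]
    constructor <;> simp [Prod.fst_sum, Prod.snd_sum, Finset.univ_sum_single]
  rw [h1, map_add, map_sum, map_sum]
  congr 1
  · exact Finset.sum_congr rfl fun j _ => (dq_eq L hd j (u j)).symm
  · exact Finset.sum_congr rfl fun j _ => (dw_eq L hd j (v j)).symm

theorem term_hasDerivAt (L : Tup m n k → ℝ)
    (hL : ContDiffOn ℝ ∞ L {p : Tup m n k | ∀ j, IsUnit (p.2 j)})
    (q : ℕ → Vec m) (g : ℕ → Mat n) (hg : ∀ i, IsUnit (g i))
    (δq : ℕ → Vec m) (S : ℕ → Mat n) (i : ℕ) :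
    HasDerivAt (fun ε : ℝ =>
        L (fun j : Fin (k + 1) => q (i + j) + ε • δq (i + j),
           fun j : Fin k =>
             (g (i + j) * NormedSpace.exp (ε • S (i + j)))⁻¹
               * (g (i + j + 1) * NormedSpace.exp (ε • S (i + j + 1)))))
      (∑ j : Fin (k + 1), Dq L j (dpt q g i) (δq (i + j))
       + ∑ j : Fin k, DW L j (dpt q g i)
           ((g (i + j))⁻¹ * g (i + j + 1) * S (i + j + 1)
             - S (i + j) * ((g (i + j))⁻¹ * g (i + j + 1)))) 0 := by
  have hp : dpt q g i ∈ {p : Tup m n k | ∀ j, IsUnit (p.2 j)} := by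
    intro j
    exact ((Matrix.isUnit_iff_isUnit_det _).2 (Matrix.isUnit_nonsing_inv_det _
      ((Matrix.isUnit_iff_isUnit_det _).1 (hg _)))).mul (hg _)
  have hd : DifferentiableAt ℝ L (dpt q g i) :=
    (hL.contDiffAt (isOpen_U.mem_nhds hp)).differentiableAt (by simp)
  have hcurve : HasDerivAt (fun ε : ℝ =>
      ((fun j : Fin (k + 1) => q (i + j) + ε • δq (i + j),
        fun j : Fin k =>
          (g (i + j) * NormedSpace.exp (ε • S (i + j)))⁻¹
            * (g (i + j + 1) * NormedSpace.exp (ε • S (i + j + 1)))) : Tup m n k))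
      ((fun j : Fin (k + 1) => δq (i + j),
        fun j : Fin k =>
          (g (i + j))⁻¹ * g (i + j + 1) * S (i + j + 1)
            - S (i + j) * ((g (i + j))⁻¹ * g (i + j + 1)))) 0 := by
    refine HasDerivAt.prodMk (hasDerivAt_pi.2 fun j => ?_) (hasDerivAt_pi.2 fun j => ?_)
    · simpa using ((hasDerivAt_id (0:ℝ)).smul_const (δq (i + j))).const_add (q (i + j))
    · exact slot_hasDerivAt _ _ _ _
  have hL0 : HasFDerivAt L (fderiv ℝ L (dpt q g i))
      ((fun ε : ℝ =>
      ((fun j : Fin (k + 1) => q (i + j) + ε • δq (i + j),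
        fun j : Fin k =>
          (g (i + j) * NormedSpace.exp (ε • S (i + j)))⁻¹
            * (g (i + j + 1) * NormedSpace.exp (ε • S (i + j + 1)))) : Tup m n k)) 0) := by
    have h0 : ((fun j : Fin (k + 1) => q (i + j) + (0:ℝ) • δq (i + j),
        fun j : Fin k =>
          (g (i + j) * NormedSpace.exp ((0:ℝ) • S (i + j)))⁻¹
            * (g (i + j + 1) * NormedSpace.exp ((0:ℝ) • S (i + j + 1)))) : Tup m n k)
        = dpt q g i := by
      simp [dpt, NormedSpace.exp_zero]
    beta_reduce
    rw [h0]
    exact hd.hasFDerivAt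
  have hder := hL0.comp_hasDerivAt 0 hcurve
  have hval := fderiv_decomp L hd
      (fun j : Fin (k + 1) => δq (i + j))
      (fun j : Fin k =>
          (g (i + j))⁻¹ * g (i + j + 1) * S (i + j + 1)
            - S (i + j) * ((g (i + j))⁻¹ * g (i + j + 1)))
  exact hder.congr_deriv hval

theorem reindex (N : ℕ) (_hk : 1 ≤ k) (hkN : k ≤ N)
    (a : ℕ → Fin (k + 1) → (Vec m →L[ℝ] ℝ)) (b : ℕ → Fin k → (Mat n →L[ℝ] ℝ))
    (Wf : ℕ → Mat n) (δq : ℕ → Vec m) (S : ℕ → Mat n)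
    (hbd : ∀ i : ℕ, (i < k ∨ (N - k + 1 ≤ i ∧ i ≤ N)) → δq i = 0 ∧ S i = 0) :
    ∑ i ∈ Finset.range (N - k + 1),
      (∑ j : Fin (k + 1), a i j (δq (i + j))
       + ∑ j : Fin k, b i j (Wf (i + j) * S (i + j + 1) - S (i + j) * Wf (i + j)))
    = ∑ r ∈ Finset.Icc k (N - k),
        (∑ j : Fin (k + 1), a (r - j) j (δq r)
         + (∑ j : Fin k, b (r - (j + 1)) j (Wf (r - 1) * S r)
            - ∑ j : Fin k, b (r - j) j (S r * Wf r))) := by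
  have hbd' : ∀ r ≤ N, r ∉ Finset.Icc k (N - k) → δq r = 0 ∧ S r = 0 := by
    intro r hrN hr
    refine hbd r ?_
    simp only [Finset.mem_Icc, not_and_or, not_le] at hr
    omega
  have hA := Stmt10Aux.helperH (k := k) (N := N) (fun j : Fin (k + 1) => (j : ℕ))
      (fun j => Fin.is_le j) (fun r j => a (r - j) j (δq r))
      (fun r hrN hr j => by beta_reduce; rw [(hbd' r hrN hr).1]; exact map_zero _) hkN
  have hB := Stmt10Aux.helperH (k := k) (N := N) (fun j : Fin k => (j : ℕ) + 1)
      (fun j => j.isLt) (fun r j => b (r - ((j : ℕ) + 1)) j (Wf (r - 1) * S r))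
      (fun r hrN hr j => by beta_reduce; rw [(hbd' r hrN hr).2, mul_zero]; exact map_zero _) hkN
  have hC := Stmt10Aux.helperH (k := k) (N := N) (fun j : Fin k => (j : ℕ))
      (fun j => le_of_lt j.isLt) (fun r j => b (r - j) j (S r * Wf r))
      (fun r hrN hr j => by beta_reduce; rw [(hbd' r hrN hr).2, zero_mul]; exact map_zero _) hkN
  beta_reduce at hA hB hC
  have hA' : ∑ i ∈ Finset.range (N - k + 1), ∑ j : Fin (k + 1), a i j (δq (i + j))
      = ∑ r ∈ Finset.Icc k (N - k), ∑ j : Fin (k + 1), a (r - j) j (δq r) := by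
    rw [← hA]
    refine Finset.sum_congr rfl fun i _ => Finset.sum_congr rfl fun j _ => ?_
    beta_reduce
    rw [Nat.add_sub_cancel]
  have hB' : ∑ i ∈ Finset.range (N - k + 1), ∑ j : Fin k, b i j (Wf (i + j) * S (i + j + 1))
      = ∑ r ∈ Finset.Icc k (N - k), ∑ j : Fin k, b (r - ((j : ℕ) + 1)) j (Wf (r - 1) * S r) := by
    rw [← hB]
    refine Finset.sum_congr rfl fun i _ => Finset.sum_congr rfl fun j _ => ?_
    beta_reduce
    rw [show i + ((j : ℕ) + 1) - ((j : ℕ) + 1) = i from by omega,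
      show i + ((j : ℕ) + 1) - 1 = i + (j : ℕ) from by omega,
      show i + ((j : ℕ) + 1) = i + (j : ℕ) + 1 from by omega]
  have hC' : ∑ i ∈ Finset.range (N - k + 1), ∑ j : Fin k, b i j (S (i + j) * Wf (i + j))
      = ∑ r ∈ Finset.Icc k (N - k), ∑ j : Fin k, b (r - j) j (S r * Wf r) := by
    rw [← hC]
    refine Finset.sum_congr rfl fun i _ => Finset.sum_congr rfl fun j _ => ?_
    beta_reduce
    rw [Nat.add_sub_cancel]
  simp only [map_sub, Finset.sum_sub_distrib, Finset.sum_add_distrib]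
  rw [hA', hB', hC']

/-- **Discrete higher-order Lagrange–Poincaré equations.**  For a `G`-invariant
discrete higher-order Lagrangian, the discrete action is stationary under all
variations fixing the boundary data if and only if the discrete higher-order
Lagrange–Poincaré equations hold for `i = k, …, N-k`. -/
theorem discrete_higherOrder_lagrange_poincare
    (N : ℕ) (hk : 1 ≤ k) (hN : 2 * k < N)
    (L : Tup m n k → ℝ)
    (hL : ContDiffOn ℝ ∞ L {p : Tup m n k | ∀ j, IsUnit (p.2 j)})
    (q : ℕ → Vec m) (g : ℕ → Mat n) (hg : ∀ i, IsUnit (g i)) :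
    (∀ (δq : ℕ → Vec m) (S : ℕ → Mat n),
      (∀ i : ℕ, (i < k ∨ (N - k + 1 ≤ i ∧ i ≤ N)) → δq i = 0 ∧ S i = 0) →
        deriv (fun ε : ℝ =>
          ∑ i ∈ Finset.range (N - k + 1),
            L (fun j : Fin (k + 1) => q (i + j) + ε • δq (i + j),
               fun j : Fin k =>
                 (g (i + j) * NormedSpace.exp (ε • S (i + j)))⁻¹
                   * (g (i + j + 1) * NormedSpace.exp (ε • S (i + j + 1))))) 0 = 0)
      ↔ ∀ i : ℕ, k ≤ i → i ≤ N - k →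
        (∑ j : Fin (k + 1), Dq L j (dpt q g (i - j)) = 0)
        ∧ ∀ η : Mat n,
            ∑ j : Fin k, DW L j (dpt q g (i - (j + 1))) ((g (i - 1))⁻¹ * g i * η)
              - ∑ j : Fin k, DW L j (dpt q g (i - j)) (η * ((g i)⁻¹ * g (i + 1)))
              = 0 := by
  have hkN : k ≤ N := by omega
  have haction : ∀ (δq : ℕ → Vec m) (S : ℕ → Mat n),
      deriv (fun ε : ℝ =>
          ∑ i ∈ Finset.range (N - k + 1),
            L (fun j : Fin (k + 1) => q (i + j) + ε • δq (i + j),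
               fun j : Fin k =>
                 (g (i + j) * NormedSpace.exp (ε • S (i + j)))⁻¹
                   * (g (i + j + 1) * NormedSpace.exp (ε • S (i + j + 1))))) 0
        = ∑ i ∈ Finset.range (N - k + 1),
            (∑ j : Fin (k + 1), Dq L j (dpt q g i) (δq (i + j))
             + ∑ j : Fin k, DW L j (dpt q g i)
                 ((g (i + j))⁻¹ * g (i + j + 1) * S (i + j + 1)
                   - S (i + j) * ((g (i + j))⁻¹ * g (i + j + 1)))) :=
    fun δq S =>
      (HasDerivAt.fun_sum fun i _ => term_hasDerivAt L hL q g hg δq S i).deriv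
  constructor
  · intro hstat i hki hiN
    have hiIcc : i ∈ Finset.Icc k (N - k) := Finset.mem_Icc.2 ⟨hki, hiN⟩
    constructor
    · -- the q-equation
      ext w
      have hb : ∀ r : ℕ, (r < k ∨ (N - k + 1 ≤ r ∧ r ≤ N)) →
          (fun r' : ℕ => if r' = i then w else 0) r = 0 ∧ (fun _ : ℕ => (0 : Mat n)) r = 0 := by
        intro r hr
        refine ⟨?_, rfl⟩
        have : r ≠ i := by omega
        simp [this]
      have hT := haction (fun r' : ℕ => if r' = i then w else 0) (fun _ : ℕ => 0)
      rw [hstat _ _ hb] at hT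
      rw [reindex N hk hkN (fun i j => Dq L j (dpt q g i)) (fun i j => DW L j (dpt q g i))
        (fun r => (g r)⁻¹ * g (r + 1)) _ _ hb] at hT
      simp only [mul_zero, zero_mul, map_zero, Finset.sum_const_zero, sub_zero, add_zero] at hT
      have hswap : ∑ x ∈ Finset.Icc k (N - k),
            ∑ j : Fin (k + 1), Dq L j (dpt q g (x - j)) (if x = i then w else 0)
          = ∑ x ∈ Finset.Icc k (N - k),
            if x = i then ∑ j : Fin (k + 1), Dq L j (dpt q g (x - j)) w else 0 :=
        Finset.sum_congr rfl fun r _ => by by_cases h : r = i <;> simp [h]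
      rw [hswap, Finset.sum_ite_eq' (Finset.Icc k (N - k)) i
        (fun x => ∑ j : Fin (k + 1), Dq L j (dpt q g (x - j)) w), if_pos hiIcc] at hT
      simpa [ContinuousLinearMap.sum_apply] using hT.symm
    · -- the matrix equation
      intro η
      have hb : ∀ r : ℕ, (r < k ∨ (N - k + 1 ≤ r ∧ r ≤ N)) →
          (fun _ : ℕ => (0 : Vec m)) r = 0 ∧ (fun r' : ℕ => if r' = i then η else 0) r = 0 := by
        intro r hr
        refine ⟨rfl, ?_⟩
        have : r ≠ i := by omega
        simp [this]
      have hT := haction (fun _ : ℕ => 0) (fun r' : ℕ => if r' = i then η else 0)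
      rw [hstat _ _ hb] at hT
      rw [reindex N hk hkN (fun i j => Dq L j (dpt q g i)) (fun i j => DW L j (dpt q g i))
        (fun r => (g r)⁻¹ * g (r + 1)) _ _ hb] at hT
      simp only [map_zero, Finset.sum_const_zero, zero_add] at hT
      have hswap : ∑ x ∈ Finset.Icc k (N - k),
            (∑ j : Fin k, DW L j (dpt q g (x - ((j : ℕ) + 1)))
                ((g (x - 1))⁻¹ * g (x - 1 + 1) * if x = i then η else 0)
              - ∑ j : Fin k, DW L j (dpt q g (x - j))
                ((if x = i then η else 0) * ((g x)⁻¹ * g (x + 1))))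
          = ∑ x ∈ Finset.Icc k (N - k),
            if x = i then
              (∑ j : Fin k, DW L j (dpt q g (x - ((j : ℕ) + 1)))
                  ((g (x - 1))⁻¹ * g (x - 1 + 1) * η)
                - ∑ j : Fin k, DW L j (dpt q g (x - j)) (η * ((g x)⁻¹ * g (x + 1)))) else 0 :=
        Finset.sum_congr rfl fun r _ => by by_cases h : r = i <;> simp [h]
      rw [hswap, Finset.sum_ite_eq' (Finset.Icc k (N - k)) i
        (fun x => (∑ j : Fin k, DW L j (dpt q g (x - ((j : ℕ) + 1)))
                ((g (x - 1))⁻¹ * g (x - 1 + 1) * η)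
              - ∑ j : Fin k, DW L j (dpt q g (x - j)) (η * ((g x)⁻¹ * g (x + 1))))),
        if_pos hiIcc] at hT
      have hi1 : i - 1 + 1 = i := by omega
      rw [hi1] at hT
      exact hT.symm
  · intro heq δq S hb
    rw [haction δq S,
      reindex N hk hkN (fun i j => Dq L j (dpt q g i)) (fun i j => DW L j (dpt q g i))
        (fun r => (g r)⁻¹ * g (r + 1)) _ _ hb]
    refine Finset.sum_eq_zero fun r hr => ?_
    rw [Finset.mem_Icc] at hr
    obtain ⟨h1, h2⟩ := heq r hr.1 hr.2
    have e1 : ∑ j : Fin (k + 1), Dq L j (dpt q g (r - j)) (δq r) = 0 := by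
      rw [← ContinuousLinearMap.sum_apply, h1, ContinuousLinearMap.zero_apply]
    have hr1 : r - 1 + 1 = r := by omega
    rw [e1, zero_add]
    have e2 := h2 (S r)
    rw [hr1]
    exact e2

end Stmt10
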